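/- Let B be a smooth manifold and let f, a, b : B → ℝ be smooth functions with 0 < f(p) < a(p) < b(p) < 1 for all p ∈ B. Then there exists a smooth function v : B × (0,1) → ℝ with 0 < v(p,x) ≤ 1 such that: (i) for every (p,x) ∈ B × (0,1), there exists a solution γ : [0,1] → (0,1) of γ'(t) = v(p, γ(t)) with γ(0) = x if and only if x < f(p); and (ii) v = 1 on some neighbourhood of the set {(p,x) : f(p) ≤ x ≤ a(p)} ∪ {(p,x) : x ≥ b(p)} in B × (0,1). -/

import Mathlib

open Set Filter Manifold

noncomputable section

lemma expNegInvGlue_mono : Monotone expNegInvGlue := by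
  intro x y hxy
  rcases le_or_gt x 0 with hx | hx
  · rw [expNegInvGlue.zero_of_nonpos hx]; exact expNegInvGlue.nonneg y
  · have hy : 0 < y := hx.trans_le hxy
    rw [show expNegInvGlue x = Real.exp (-x⁻¹) by simp [expNegInvGlue, hx.not_ge],
        show expNegInvGlue y = Real.exp (-y⁻¹) by simp [expNegInvGlue, hy.not_ge]]
    gcongr

lemma smoothTransition_mono : Monotone Real.smoothTransition := by
  intro x y hxy
  unfold Real.smoothTransition
  rw [div_le_div_iff₀ (Real.smoothTransition.pos_denom x) (Real.smoothTransition.pos_denom y)]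
  have h1 : expNegInvGlue x ≤ expNegInvGlue y := expNegInvGlue_mono hxy
  have h2 : expNegInvGlue (1 - y) ≤ expNegInvGlue (1 - x) := expNegInvGlue_mono (by linarith)
  have h3 := mul_le_mul h1 h2 (expNegInvGlue.nonneg _) (expNegInvGlue.nonneg _)
  nlinarith [expNegInvGlue.nonneg x, expNegInvGlue.nonneg y]

lemma deriv_nonneg_of_monotone {g : ℝ → ℝ} (hm : Monotone g) (x : ℝ) : 0 ≤ deriv g x := by
  by_cases hd : DifferentiableAt ℝ g x
  · have h := hd.hasDerivAt
    rw [hasDerivAt_iff_tendsto_slope] at h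
    refine ge_of_tendsto h (eventually_of_mem self_mem_nhdsWithin fun y hy => ?_)
    rcases lt_or_gt_of_ne (hy : y ≠ x) with h' | h'
    · rw [slope_def_field]
      exact div_nonneg_iff.2 (Or.inr ⟨by linarith [hm h'.le], by linarith⟩)
    · rw [slope_def_field]
      exact div_nonneg (by linarith [hm h'.le]) (by linarith)
  · rw [deriv_zero_of_not_differentiableAt hd]

lemma S_hasDerivAt (t : ℝ) : HasDerivAt Real.smoothTransition (deriv Real.smoothTransition t) t :=
  ((Real.smoothTransition.contDiff (n := 1)).differentiable (by simp) t).hasDerivAt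

lemma dS_nonneg (t : ℝ) : 0 ≤ deriv Real.smoothTransition t :=
  deriv_nonneg_of_monotone smoothTransition_mono t

lemma dS_contDiff : ContDiff ℝ (⊤ : ℕ∞) (deriv Real.smoothTransition) :=
  (contDiff_infty_iff_deriv.mp (Real.smoothTransition.contDiff (n := (⊤ : ℕ∞)))).2

lemma dS_zero_of_neg {t : ℝ} (ht : t < 0) : deriv Real.smoothTransition t = 0 := by
  have h : Real.smoothTransition =ᶠ[nhds t] fun _ => (0 : ℝ) :=
    eventually_of_mem (Iio_mem_nhds ht) fun y hy =>
      Real.smoothTransition.zero_of_nonpos (le_of_lt hy)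
  rw [h.deriv_eq, deriv_const]

lemma dS_zero_of_gt {t : ℝ} (ht : 1 < t) : deriv Real.smoothTransition t = 0 := by
  have h : Real.smoothTransition =ᶠ[nhds t] fun _ => (1 : ℝ) :=
    eventually_of_mem (Ioi_mem_nhds ht) fun y hy =>
      Real.smoothTransition.one_of_one_le (le_of_lt hy)
  rw [h.deriv_eq, deriv_const]

/-- The argument rescaling. -/
def thetaAux (c d y : ℝ) : ℝ := 4 * ((y - c) / d) - 1

/-- The weight `1/v`. -/
def wAux (fp c d y : ℝ) : ℝ :=
  1 + fp * (deriv Real.smoothTransition (thetaAux c d y) * (4 / d))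

/-- An explicit primitive of `wAux`. -/
def FAux (fp c d y : ℝ) : ℝ := y + fp * Real.smoothTransition (thetaAux c d y)

lemma wAux_ge_one {fp c d : ℝ} (hfp : 0 ≤ fp) (hd : 0 < d) (y : ℝ) : 1 ≤ wAux fp c d y := by
  have h2 : (0:ℝ) ≤ 4 / d := le_of_lt (by positivity)
  have := mul_nonneg (dS_nonneg (thetaAux c d y)) h2
  unfold wAux
  nlinarith

lemma wAux_pos {fp c d : ℝ} (hfp : 0 ≤ fp) (hd : 0 < d) (y : ℝ) : 0 < wAux fp c d y :=
  lt_of_lt_of_le one_pos (wAux_ge_one hfp hd y)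

lemma thetaAux_hasDerivAt (c : ℝ) {d : ℝ} (_hd : d ≠ 0) (y : ℝ) :
    HasDerivAt (thetaAux c d) (4 / d) y := by
  have h1 : HasDerivAt (fun y : ℝ => (y - c) / d) (1 / d) y :=
    ((hasDerivAt_id y).sub_const c).div_const d
  have h2 := (h1.const_mul 4).sub_const 1
  show HasDerivAt (fun y => 4 * ((y - c) / d) - 1) (4 / d) y
  rw [show (4:ℝ) / d = 4 * (1 / d) by ring]
  exact h2

lemma FAux_hasDerivAt (fp c : ℝ) {d : ℝ} (hd : 0 < d) (y : ℝ) :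
    HasDerivAt (FAux fp c d) (wAux fp c d y) y := by
  have h1 : HasDerivAt (fun y => Real.smoothTransition (thetaAux c d y))
      (deriv Real.smoothTransition (thetaAux c d y) * (4 / d)) y :=
    (S_hasDerivAt (thetaAux c d y)).comp y (thetaAux_hasDerivAt c hd.ne' y)
  have h2 := (hasDerivAt_id y).add (h1.const_mul fp)
  exact h2

lemma FAux_eq_low {fp c d y : ℝ} (hd : 0 < d) (hy : y ≤ c) : FAux fp c d y = y := by
  have h1 : (y - c) / d ≤ 0 := div_nonpos_iff.2 (Or.inr ⟨by linarith, hd.le⟩)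
  have h2 : thetaAux c d y ≤ 0 := by unfold thetaAux; linarith
  simp [FAux, Real.smoothTransition.zero_of_nonpos h2]

lemma FAux_eq_high {fp c d y : ℝ} (hd : 0 < d) (hy : c + d ≤ y) : FAux fp c d y = y + fp := by
  have h1 : (1:ℝ) ≤ (y - c) / d := (le_div_iff₀ hd).2 (by linarith)
  have h2 : (1:ℝ) ≤ thetaAux c d y := by unfold thetaAux; linarith
  simp [FAux, Real.smoothTransition.one_of_one_le h2]

lemma FAux_lb (fp c d y : ℝ) (hfp : 0 ≤ fp) : y ≤ FAux fp c d y := by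
  have := Real.smoothTransition.nonneg (thetaAux c d y)
  unfold FAux; nlinarith

lemma FAux_ub (fp c d y : ℝ) (hfp : 0 ≤ fp) : FAux fp c d y ≤ y + fp := by
  have := Real.smoothTransition.le_one (thetaAux c d y)
  unfold FAux; nlinarith

/-- The key one-dimensional statement. -/
lemma main_iff {fp c d : ℝ} (hfp : 0 < fp) (hfc : fp < c) (hd : 0 < d) (hcd1 : c + d < 1)
    {x : ℝ} (hx : x ∈ Ioo (0:ℝ) 1) :
    (∃ γ : ℝ → ℝ, γ 0 = x ∧ ∀ t ∈ Icc (0:ℝ) 1, γ t ∈ Ioo (0:ℝ) 1 ∧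
        HasDerivAt γ ((wAux fp c d (γ t))⁻¹) t) ↔ x < fp := by
  set F : ℝ → ℝ := FAux fp c d with hF
  have hF' : ∀ y, HasDerivAt F (wAux fp c d y) y := FAux_hasDerivAt fp c hd
  have hw1 : ∀ y, 1 ≤ wAux fp c d y := wAux_ge_one hfp.le hd
  have hwpos : ∀ y, 0 < wAux fp c d y := wAux_pos hfp.le hd
  have hFmono : StrictMono F := strictMono_of_deriv_pos fun y => by
    rw [(hF' y).deriv]; exact hwpos y
  have hFcont : Continuous F := Differentiable.continuous fun y => (hF' y).differentiableAt
  have hF0 : F 0 = 0 := FAux_eq_low hd (by linarith)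
  have hF1 : F 1 = 1 + fp := FAux_eq_high hd (by linarith)
  have hFfp : F fp = fp := FAux_eq_low hd (by linarith)
  have hsurj : Function.Surjective F := by
    intro z
    have h1 : F (z - fp) ≤ z := le_trans (FAux_ub fp c d _ hfp.le) (by linarith)
    have h2 : z ≤ F z := FAux_lb fp c d z hfp.le
    obtain ⟨y, -, hy⟩ := intermediate_value_Icc (by linarith : z - fp ≤ z)
      hFcont.continuousOn ⟨h1, h2⟩
    exact ⟨y, hy⟩
  set e : ℝ ≃o ℝ := StrictMono.orderIsoOfSurjective F hFmono hsurj with he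
  have hge : ∀ y, e.symm (F y) = y := fun y =>
    StrictMono.orderIsoOfSurjective_symm_apply_self F hFmono hsurj y
  have hFg : ∀ z, F (e.symm z) = z := fun z =>
    StrictMono.orderIsoOfSurjective_self_symm_apply F hFmono hsurj z
  have hg_cont : Continuous fun z => e.symm z := e.symm.toHomeomorph.continuous
  constructor
  · rintro ⟨γ, hγ0, hγ⟩
    set φ : ℝ → ℝ := fun t => F (γ t) - (F x + t) with hφ
    have hφ' : ∀ t ∈ Icc (0:ℝ) 1, HasDerivAt φ 0 t := by
      intro t ht
      have h1 := (hF' (γ t)).comp t (hγ t ht).2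
      have h2 : wAux fp c d (γ t) * (wAux fp c d (γ t))⁻¹ = 1 :=
        mul_inv_cancel₀ (hwpos (γ t)).ne'
      have h3 : HasDerivAt (fun t : ℝ => F x + t) 1 t := (hasDerivAt_id t).const_add (F x)
      have h4 := h1.sub h3
      rw [h2, sub_self] at h4
      exact h4
    have hφc : ContinuousOn φ (Icc 0 1) := fun t ht =>
      (hφ' t ht).continuousAt.continuousWithinAt
    have hconst := constant_of_has_deriv_right_zero hφc
      (fun t ht => (hφ' t (Ico_subset_Icc_self ht)).hasDerivWithinAt)
    have h1 := hconst 1 (right_mem_Icc.2 zero_le_one)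
    have hγ1 : γ 1 < 1 := (hγ 1 (right_mem_Icc.2 zero_le_one)).1.2
    have hFγ1 : F (γ 1) < F 1 := hFmono hγ1
    have hlt : F x < F fp := by
      simp only [hφ, hγ0] at h1
      rw [hFfp]
      rw [hF1] at hFγ1
      linarith
    exact hFmono.lt_iff_lt.1 hlt
  · intro hxf
    have hFx0 : 0 < F x := by have := hFmono hx.1; rwa [hF0] at this
    have hFxf : F x < fp := by have := hFmono hxf; rwa [hFfp] at this
    refine ⟨fun t => e.symm (F x + t), by simpa using hge x, ?_⟩
    intro t ht
    refine ⟨⟨?_, ?_⟩, ?_⟩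
    · have h := e.symm.strictMono (show F 0 < F x + t by rw [hF0]; linarith [ht.1])
      rwa [hge 0] at h
    · have h := e.symm.strictMono (show F x + t < F 1 by rw [hF1]; linarith [ht.2])
      rwa [hge 1] at h
    · have h1 := (HasDerivAt.of_local_left_inverse hg_cont.continuousAt
        (hF' (e.symm (F x + t))) (hwpos _).ne' (Eventually.of_forall hFg)).comp t
        ((hasDerivAt_id t).const_add (F x))
      rw [mul_one] at h1
      exact h1

theorem adjust_time_one
    {E : Type*} [NormedAddCommGroup E] [NormedSpace ℝ E] [FiniteDimensional ℝ E]
    {H : Type*} [TopologicalSpace H] (I : ModelWithCorners ℝ E H) [I.Boundaryless]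
    {B : Type*} [TopologicalSpace B] [ChartedSpace H B]
    [IsManifold I (⊤ : ℕ∞) B] [T2Space B] [SecondCountableTopology B]
    (f a b : B → ℝ)
    (hf : ContMDiff I 𝓘(ℝ, ℝ) (⊤ : ℕ∞) f) (ha : ContMDiff I 𝓘(ℝ, ℝ) (⊤ : ℕ∞) a)
    (hb : ContMDiff I 𝓘(ℝ, ℝ) (⊤ : ℕ∞) b)
    (horder : ∀ p, 0 < f p ∧ f p < a p ∧ a p < b p ∧ b p < 1) :
    ∃ v : B × ℝ → ℝ,
      ContMDiffOn (I.prod 𝓘(ℝ, ℝ)) 𝓘(ℝ, ℝ) (⊤ : ℕ∞) v (univ ×ˢ Ioo (0 : ℝ) 1) ∧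
      (∀ p : B, ∀ x ∈ Ioo (0 : ℝ) 1, v (p, x) ∈ Ioc (0:ℝ) 1) ∧
      -- (i)
      (∀ p : B, ∀ x ∈ Ioo (0 : ℝ) 1,
        ((∃ γ : ℝ → ℝ, γ 0 = x ∧
            ∀ t ∈ Icc (0:ℝ) 1, γ t ∈ Ioo (0 : ℝ) 1 ∧ HasDerivAt γ (v (p, γ t)) t)
          ↔ x < f p)) ∧
      -- (ii)
      (∃ U : Set (B × ℝ), IsOpen U ∧
        {q : B × ℝ | q.2 ∈ Ioo (0:ℝ) 1 ∧
          ((f q.1 ≤ q.2 ∧ q.2 ≤ a q.1) ∨ b q.1 ≤ q.2)} ⊆ U ∧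
        ∀ q ∈ U ∩ (univ ×ˢ Ioo (0 : ℝ) 1), v q = 1) := by
  have hd : ∀ p, 0 < b p - a p := fun p => by have := (horder p).2.2.1; linarith
  refine ⟨fun q => (wAux (f q.1) (a q.1) (b q.1 - a q.1) q.2)⁻¹, ?_, ?_, ?_, ?_⟩
  · -- smoothness
    have hfa : ContMDiff (I.prod 𝓘(ℝ, ℝ)) 𝓘(ℝ, ℝ) (⊤ : ℕ∞) (fun q : B × ℝ => a q.1) :=
      ha.comp contMDiff_fst
    have hfb : ContMDiff (I.prod 𝓘(ℝ, ℝ)) 𝓘(ℝ, ℝ) (⊤ : ℕ∞) (fun q : B × ℝ => b q.1) :=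
      hb.comp contMDiff_fst
    have hff : ContMDiff (I.prod 𝓘(ℝ, ℝ)) 𝓘(ℝ, ℝ) (⊤ : ℕ∞) (fun q : B × ℝ => f q.1) :=
      hf.comp contMDiff_fst
    have hden : ContMDiff (I.prod 𝓘(ℝ, ℝ)) 𝓘(ℝ, ℝ) (⊤ : ℕ∞) (fun q : B × ℝ => b q.1 - a q.1) :=
      hfb.sub hfa
    have hdenne : ∀ q : B × ℝ, b q.1 - a q.1 ≠ 0 := fun q => (hd q.1).ne'
    have hθQ : ContMDiff (I.prod 𝓘(ℝ, ℝ)) 𝓘(ℝ, ℝ) (⊤ : ℕ∞)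
        (fun q : B × ℝ => thetaAux (a q.1) (b q.1 - a q.1) q.2) := by
      unfold thetaAux
      exact (contMDiff_const.mul ((contMDiff_snd.sub hfa).div₀ hden hdenne)).sub contMDiff_const
    have hdSθ : ContMDiff (I.prod 𝓘(ℝ, ℝ)) 𝓘(ℝ, ℝ) (⊤ : ℕ∞)
        (fun q : B × ℝ => deriv Real.smoothTransition (thetaAux (a q.1) (b q.1 - a q.1) q.2)) :=
      (dS_contDiff.contMDiff).comp hθQ
    have hwQ : ContMDiff (I.prod 𝓘(ℝ, ℝ)) 𝓘(ℝ, ℝ) (⊤ : ℕ∞)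
        (fun q : B × ℝ => wAux (f q.1) (a q.1) (b q.1 - a q.1) q.2) := by
      unfold wAux
      exact contMDiff_const.add (hff.mul (hdSθ.mul (contMDiff_const.div₀ hden hdenne)))
    exact (hwQ.inv₀ fun q => (wAux_pos (horder q.1).1.le (hd q.1) q.2).ne').contMDiffOn
  · -- range in (0,1]
    intro p x _
    exact ⟨inv_pos.2 (wAux_pos (horder p).1.le (hd p) x),
      inv_le_one_of_one_le₀ (wAux_ge_one (horder p).1.le (hd p) x)⟩
  · -- (i)
    intro p x hx
    obtain ⟨h0f, hfa', hab, hb1⟩ := horder p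
    exact main_iff h0f hfa' (hd p) (by linarith) hx
  · -- (ii)
    refine ⟨{q : B × ℝ | q.2 < a q.1 + (b q.1 - a q.1) / 4} ∪
        {q : B × ℝ | a q.1 + (b q.1 - a q.1) / 2 < q.2}, ?_, ?_, ?_⟩
    · have hca : Continuous fun q : B × ℝ => a q.1 := ha.continuous.comp continuous_fst
      have hcb : Continuous fun q : B × ℝ => b q.1 := hb.continuous.comp continuous_fst
      exact (isOpen_lt continuous_snd (hca.add ((hcb.sub hca).div_const 4))).union
        (isOpen_lt (hca.add ((hcb.sub hca).div_const 2)) continuous_snd)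
    · rintro ⟨p, x⟩ ⟨hx01, hcase⟩
      rcases hcase with ⟨-, hxa⟩ | hbx
      · exact Or.inl (by have := hd p; simp only [mem_setOf_eq]; linarith)
      · exact Or.inr (by have := hd p; simp only [mem_setOf_eq]; linarith)
    · rintro ⟨p, x⟩ ⟨hU, -, hx01⟩
      have hdp := hd p
      have hz : deriv Real.smoothTransition (thetaAux (a p) (b p - a p) x) = 0 := by
        rcases hU with h | h
        · apply dS_zero_of_neg
          simp only [mem_setOf_eq] at h
          have h1 : (x - a p) / (b p - a p) < 1 / 4 :=
            (div_lt_div_iff₀ hdp (by norm_num)).2 (by linarith)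
          unfold thetaAux; linarith
        · apply dS_zero_of_gt
          simp only [mem_setOf_eq] at h
          have h1 : (1:ℝ) / 2 < (x - a p) / (b p - a p) :=
            (div_lt_div_iff₀ (by norm_num) hdp).2 (by linarith)
          unfold thetaAux; linarith
      simp [wAux, hz]
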